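/- arXiv:2402.08710 — 3 statements merged into one kernel-verified Lean document; each statement's English description precedes it below -/
import Mathlib

section
/- Let C > 1, c₂ > 0, and suppose for a prime p one has p^(c₂/2) > 2C. Let j₀ = 1 + ⌊4/c₂ + 2c₁/c₂⌋ where c₁ > 0 is fixed, and let F be a multiplicative function with F(p^e) ≤ min{c₀/p, p^(c₁ − e c₂)} for all e ≥ 1. Then Σ_{j=1}^∞ C^j F(p^j) ≤ j₀ C^(j₀) c₀/p + 2/p², and in particular this sum is at most ν₁/p for some constant ν₁ depending only on C, c₀, c₁, c₂. -/
open Real Finset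

theorem stmt_6 (c₀ c₁ c₂ C : ℝ) (h₀ : 0 < c₀) (h₁ : 0 < c₁) (h₂ : 0 < c₂) (hC : 1 < C) :
    (∀ (p : ℕ) (F : ℕ → ℝ), p.Prime → 2 * C < (p : ℝ) ^ (c₂ / 2) →
      (∀ n, 0 ≤ F n) → F 1 = 1 →
      (∀ m n : ℕ, Nat.Coprime m n → F (m * n) = F m * F n) →
      (∀ q e : ℕ, q.Prime → 1 ≤ e →
        F (q ^ e) ≤ min (c₀ / q) ((q : ℝ) ^ (c₁ - (e : ℝ) * c₂))) →
      (∑' j : ℕ, C ^ (j + 1) * F (p ^ (j + 1))) ≤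
        ((1 + ⌊4 / c₂ + 2 * c₁ / c₂⌋₊ : ℕ) : ℝ) * C ^ (1 + ⌊4 / c₂ + 2 * c₁ / c₂⌋₊) * c₀ / p
          + 2 / (p : ℝ) ^ 2)
    ∧ ∃ ν₁ : ℝ, 0 < ν₁ ∧ ∀ (p : ℕ) (F : ℕ → ℝ), p.Prime → 2 * C < (p : ℝ) ^ (c₂ / 2) →
      (∀ n, 0 ≤ F n) → F 1 = 1 →
      (∀ m n : ℕ, Nat.Coprime m n → F (m * n) = F m * F n) →
      (∀ q e : ℕ, q.Prime → 1 ≤ e →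
        F (q ^ e) ≤ min (c₀ / q) ((q : ℝ) ^ (c₁ - (e : ℝ) * c₂))) →
      (∑' j : ℕ, C ^ (j + 1) * F (p ^ (j + 1))) ≤ ν₁ / p := by
  have hCpos : (0:ℝ) < C := lt_trans one_pos hC
  have key : ∀ (p : ℕ) (F : ℕ → ℝ), p.Prime → 2 * C < (p : ℝ) ^ (c₂ / 2) →
      (∀ n, 0 ≤ F n) → F 1 = 1 →
      (∀ m n : ℕ, Nat.Coprime m n → F (m * n) = F m * F n) →
      (∀ q e : ℕ, q.Prime → 1 ≤ e →
        F (q ^ e) ≤ min (c₀ / q) ((q : ℝ) ^ (c₁ - (e : ℝ) * c₂))) →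
      (∑' j : ℕ, C ^ (j + 1) * F (p ^ (j + 1))) ≤
        ((1 + ⌊4 / c₂ + 2 * c₁ / c₂⌋₊ : ℕ) : ℝ) * C ^ (1 + ⌊4 / c₂ + 2 * c₁ / c₂⌋₊) * c₀ / p
          + 2 / (p : ℝ) ^ 2 := by
    intro p F hp hpC hF0 hF1 hFmul hFb
    set J : ℕ := 1 + ⌊4 / c₂ + 2 * c₁ / c₂⌋₊ with hJ
    have hp2 : 2 ≤ p := hp.two_le
    have hp1 : (1:ℝ) ≤ p := by exact_mod_cast hp.one_le
    have hppos : (0:ℝ) < p := by exact_mod_cast hp.pos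
    have hq0 : (0:ℝ) < (p:ℝ) ^ (c₂/2) := Real.rpow_pos_of_pos hppos _
    set f : ℕ → ℝ := fun j => C ^ (j + 1) * F (p ^ (j + 1)) with hf
    have hf0 : ∀ j, 0 ≤ f j := fun j => mul_nonneg (pow_nonneg hCpos.le _) (hF0 _)
    have hJgt : (4 / c₂ + 2 * c₁ / c₂ : ℝ) < J := by
      have h := Nat.lt_floor_add_one (4 / c₂ + 2 * c₁ / c₂ : ℝ)
      rw [hJ]; push_cast; linarith
    have tail : ∀ e : ℕ, J ≤ e → C ^ e * F (p ^ e) ≤ (1/2:ℝ) ^ e * (1 / (p:ℝ)^2) := by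
      intro e he
      have he1 : 1 ≤ e := le_trans (by omega) he
      have hFe : F (p ^ e) ≤ (p:ℝ) ^ (c₁ - (e:ℝ) * c₂) := (hFb p e hp he1).trans (min_le_right _ _)
      have hec : 4 + 2 * c₁ < (e:ℝ) * c₂ := by
        have hJe : (J:ℝ) ≤ e := by exact_mod_cast he
        have h4 : 4 / c₂ + 2 * c₁ / c₂ < (e:ℝ) := lt_of_lt_of_le hJgt hJe
        have : (4 + 2 * c₁) = (4 / c₂ + 2 * c₁ / c₂) * c₂ := by field_simp
        rw [this]
        exact mul_lt_mul_of_pos_right h4 h₂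
      have hsplit : (p:ℝ) ^ (c₁ - (e:ℝ) * c₂)
          = (p:ℝ) ^ (c₁ - (e:ℝ) * c₂ / 2) * (((p:ℝ) ^ (c₂/2)) ^ e)⁻¹ := by
        rw [← Real.rpow_natCast ((p:ℝ) ^ (c₂/2)) e, ← Real.rpow_mul hppos.le,
            ← Real.rpow_neg hppos.le, ← Real.rpow_add hppos]
        ring_nf
      have h1 : (p:ℝ) ^ (c₁ - (e:ℝ) * c₂ / 2) ≤ 1 / (p:ℝ)^2 := by
        have hexp : c₁ - (e:ℝ) * c₂ / 2 ≤ (-2 : ℝ) := by linarith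
        calc (p:ℝ) ^ (c₁ - (e:ℝ) * c₂ / 2) ≤ (p:ℝ) ^ (-2:ℝ) :=
              Real.rpow_le_rpow_of_exponent_le hp1 hexp
          _ = 1 / (p:ℝ)^2 := by
              rw [show (-2:ℝ) = -((2:ℕ):ℝ) by norm_num, Real.rpow_neg hppos.le,
                Real.rpow_natCast, one_div]
      have h2 : C ^ e * (((p:ℝ) ^ (c₂/2)) ^ e)⁻¹ ≤ (1/2:ℝ) ^ e := by
        have heq : C ^ e * (((p:ℝ) ^ (c₂/2)) ^ e)⁻¹ = (C / ((p:ℝ) ^ (c₂/2))) ^ e := by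
          rw [div_pow]; ring
        rw [heq]
        apply pow_le_pow_left₀ (div_nonneg hCpos.le hq0.le)
        rw [div_le_div_iff₀ hq0 (by norm_num : (0:ℝ) < 2)]
        linarith
      calc C ^ e * F (p ^ e) ≤ C ^ e * ((p:ℝ) ^ (c₁ - (e:ℝ) * c₂)) :=
            mul_le_mul_of_nonneg_left hFe (pow_nonneg hCpos.le _)
        _ = (C ^ e * (((p:ℝ) ^ (c₂/2)) ^ e)⁻¹) * ((p:ℝ) ^ (c₁ - (e:ℝ) * c₂ / 2)) := by
            rw [hsplit]; ring
        _ ≤ (1/2:ℝ) ^ e * (1 / (p:ℝ)^2) :=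
            mul_le_mul h2 h1 (Real.rpow_nonneg hppos.le _)
              (pow_nonneg (by norm_num) _)
    have hshift : ∀ i, f (i + J) ≤ (1/2:ℝ)^i * (1/(p:ℝ)^2) := by
      intro i
      have h1 : C ^ (i + J + 1) * F (p ^ (i + J + 1)) ≤ (1/2:ℝ) ^ (i + J + 1) * (1 / (p:ℝ)^2) :=
        tail (i + J + 1) (by omega)
      have h2 : (1/2:ℝ) ^ (i + J + 1) ≤ (1/2:ℝ) ^ i :=
        pow_le_pow_of_le_one (by norm_num) (by norm_num) (by omega)
      calc f (i + J) ≤ (1/2:ℝ) ^ (i + J + 1) * (1 / (p:ℝ)^2) := h1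
        _ ≤ (1/2:ℝ)^i * (1/(p:ℝ)^2) := by
            apply mul_le_mul_of_nonneg_right h2
            positivity
    have hg : Summable (fun i : ℕ => (1/2:ℝ)^i * (1/(p:ℝ)^2)) :=
      summable_geometric_two.mul_right _
    have hsum_shift : Summable (fun i => f (i + J)) :=
      Summable.of_nonneg_of_le (fun i => hf0 _) hshift hg
    have hsum : Summable f := (summable_nat_add_iff J).mp hsum_shift
    have head : ∑ i ∈ Finset.range J, f i ≤ (J:ℝ) * C ^ J * c₀ / p := by
      have hb : ∀ i ∈ Finset.range J, f i ≤ C ^ J * (c₀ / p) := by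
        intro i hi
        have hi' : i + 1 ≤ J := Finset.mem_range.mp hi
        have hFi : F (p ^ (i+1)) ≤ c₀ / p := (hFb p (i+1) hp (by omega)).trans (min_le_left _ _)
        calc f i ≤ C ^ (i+1) * (c₀ / p) :=
              mul_le_mul_of_nonneg_left hFi (pow_nonneg hCpos.le _)
          _ ≤ C ^ J * (c₀ / p) := by
              apply mul_le_mul_of_nonneg_right _ (div_nonneg h₀.le hppos.le)
              exact pow_le_pow_right₀ hC.le hi'
      calc ∑ i ∈ Finset.range J, f i ≤ ∑ _i ∈ Finset.range J, C ^ J * (c₀ / p) :=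
            Finset.sum_le_sum hb
        _ = (J:ℝ) * C ^ J * c₀ / p := by
            rw [Finset.sum_const, Finset.card_range, nsmul_eq_mul]; ring
    have tailtsum : (∑' i, f (i + J)) ≤ 2 / (p:ℝ)^2 := by
      calc (∑' i, f (i+J)) ≤ ∑' i, (1/2:ℝ)^i * (1/(p:ℝ)^2) :=
            Summable.tsum_le_tsum hshift hsum_shift hg
        _ = 2 * (1/(p:ℝ)^2) := by rw [tsum_mul_right, tsum_geometric_two]
        _ = 2 / (p:ℝ)^2 := by ring
    have hsplit := Summable.sum_add_tsum_nat_add J hsum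
    calc (∑' j : ℕ, f j) = ∑ i ∈ Finset.range J, f i + ∑' i, f (i + J) := hsplit.symm
      _ ≤ (J:ℝ) * C ^ J * c₀ / p + 2 / (p:ℝ)^2 := add_le_add head tailtsum
  refine ⟨key, ?_⟩
  set J : ℕ := 1 + ⌊4 / c₂ + 2 * c₁ / c₂⌋₊ with hJ
  refine ⟨(J:ℝ) * C ^ J * c₀ + 1, by positivity, ?_⟩
  intro p F hp hpC hF0 hF1 hFmul hFb
  have hp2 : (2:ℝ) ≤ p := by exact_mod_cast hp.two_le
  have hppos : (0:ℝ) < p := by exact_mod_cast hp.pos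
  have h2p : 2 / (p:ℝ)^2 ≤ 1 / p := by
    rw [div_le_div_iff₀ (by positivity) hppos]
    nlinarith
  calc (∑' j : ℕ, C ^ (j + 1) * F (p ^ (j + 1)))
      ≤ (J:ℝ) * C ^ J * c₀ / p + 2 / (p:ℝ)^2 := key p F hp hpC hF0 hF1 hFmul hFb
    _ ≤ (J:ℝ) * C ^ J * c₀ / p + 1 / p := by linarith
    _ = ((J:ℝ) * C ^ J * c₀ + 1) / p := by rw [← add_div]
end

section
/- Fix a positive constant α₁ and let g : ℕ → [0,∞) be multiplicative with g(p) ≤ α₁/p for all primes p. For all a ∈ ℕ, α₂, α₃ > 0, and x ≥ 2, Σ_{m squarefree, gcd(m,a)=1, p|m ⇒ α₁ < p ≤ x^(α₂)} g(m) ∏_{α₁ < p ≤ x^(α₃), p ∤ am} (1 − g(p))² ≪ 𝒞 · ∏_{α₁ < p ≤ x^(min{α₂,α₃}), p ∤ a} (1 − g(p)), where 𝒞 = ∏_{x^(α₂) < p ≤ x^(α₃), p ∤ a} (1 − g(p))² if α₂ ≤ α₃ and 𝒞 = ∏_{x^(α₃) < p ≤ x^(α₂), p ∤ a} (1 − g(p))^(−1)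 if α₂ > α₃, and the implied constant depends only on α₁. -/
open scoped Classical
open Finset

lemma aux_sum_inv_sq (N : ℕ) : ∑ k ∈ Finset.Icc 1 N, (((k:ℝ))^2)⁻¹ ≤ 2 - ((N:ℝ))⁻¹ := by
  induction N with
  | zero => simp
  | succ M ih =>
    rcases Nat.eq_zero_or_pos M with hM | hM
    · subst hM; norm_num
    rw [Finset.sum_Icc_succ_top (by omega)]
    have hM1 : (1:ℝ) ≤ (M:ℝ) := by exact_mod_cast hM
    have h1 : (0:ℝ) < (M:ℝ) := by linarith
    have h2 : (0:ℝ) < (M:ℝ) + 1 := by linarith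
    have key : (((M:ℝ)+1)^2)⁻¹ ≤ (M:ℝ)⁻¹ - ((M:ℝ)+1)⁻¹ := by
      have e : (M:ℝ)⁻¹ - ((M:ℝ)+1)⁻¹ = ((M:ℝ) * ((M:ℝ)+1))⁻¹ := by
        field_simp
        ring
      rw [e]
      apply inv_anti₀ (by positivity)
      nlinarith
    have : ((M:ℝ)+1) = ((M+1 : ℕ) : ℝ) := by push_cast; ring
    rw [← this]
    linarith

lemma aux_sum_divisors_prod_primes {f : ℕ → ℝ} (hf1 : f 1 = 1)
    (hfm : ∀ m n : ℕ, Nat.Coprime m n → f (m * n) = f m * f n)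
    (T : Finset ℕ) (hT : ∀ p ∈ T, Nat.Prime p) :
    ∑ m ∈ (∏ p ∈ T, p).divisors, f m = ∏ p ∈ T, (1 + f p) := by
  set F : ArithmeticFunction ℝ := ⟨fun n => if n = 0 then 0 else f n, by simp⟩ with hF
  have hFval : ∀ n : ℕ, n ≠ 0 → F n = f n := fun n hn => by simp [hF, hn]
  have hFmult : F.IsMultiplicative := by
    constructor
    · show (if (1:ℕ) = 0 then (0:ℝ) else f 1) = 1
      simp [hf1]
    · intro m n hmn
      rcases eq_or_ne m 0 with rfl | hm
      · rw [zero_mul, ArithmeticFunction.map_zero, zero_mul]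
      rcases eq_or_ne n 0 with rfl | hn
      · rw [mul_zero, ArithmeticFunction.map_zero, mul_zero]
      rw [hFval _ (Nat.mul_ne_zero hm hn), hFval _ hm, hFval _ hn]
      exact hfm m n hmn
  have hζF : (↑ArithmeticFunction.zeta * F).IsMultiplicative :=
    (ArithmeticFunction.isMultiplicative_zeta.natCast).mul hFmult
  have hpair : (↑T : Set ℕ).Pairwise (Function.onFun Nat.Coprime id) := by
    intro p hp q hq hne
    exact (Nat.coprime_primes (hT p hp) (hT q hq)).mpr hne
  have hNne : (∏ p ∈ T, p) ≠ 0 := by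
    apply Finset.prod_ne_zero_iff.mpr
    intro p hp
    exact (hT p hp).ne_zero
  have h1 : ∑ m ∈ (∏ p ∈ T, p).divisors, f m = (↑ArithmeticFunction.zeta * F) (∏ p ∈ T, p) := by
    rw [ArithmeticFunction.coe_zeta_mul_apply]
    apply Finset.sum_congr rfl
    intro d hd
    rw [hFval d (Nat.pos_of_mem_divisors hd).ne']
  rw [h1, show (∏ p ∈ T, p) = ∏ p ∈ T, id p from rfl, hζF.map_prod id T hpair]
  apply Finset.prod_congr rfl
  intro p hp
  have pp := hT p hp
  rw [id_eq, ArithmeticFunction.coe_zeta_mul_apply, pp.divisors]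
  rw [Finset.sum_insert (by simpa using Ne.symm pp.ne_one)]
  simp [hFval 1 one_ne_zero, hFval p pp.ne_zero, hf1]

lemma aux_prod_le_exp (α₁ : ℝ) (hα₁ : 0 < α₁) (g : ℕ → ℝ) (hg0 : ∀ n, 0 ≤ g n)
    (hgp : ∀ p : ℕ, p.Prime → g p ≤ α₁ / p)
    (T : Finset ℕ) (hT : ∀ p ∈ T, Nat.Prime p ∧ α₁ < (p:ℝ)) :
    ∏ p ∈ T, (1 + (g p)^2 / (1 - g p)) ≤ Real.exp (2 * α₁^2 / ((⌊α₁⌋₊ + 1 : ℝ) - α₁)) := by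
  set b := ⌊α₁⌋₊ with hbdef
  set c : ℝ := ((b:ℝ) + 1) - α₁ with hcdef
  have hb : (b:ℝ) ≤ α₁ := Nat.floor_le hα₁.le
  have hc0 : 0 < c := by
    have := Nat.lt_floor_add_one α₁
    rw [hcdef]; linarith
  have hc1 : c ≤ 1 := by rw [hcdef]; linarith
  have hpos : ∀ p ∈ T, 0 < 1 - g p := by
    intro p hp
    obtain ⟨pp, hlt⟩ := hT p hp
    have hp0 : (0:ℝ) < p := lt_trans hα₁ hlt
    have := hgp p pp
    have : g p < 1 := lt_of_le_of_lt this ((div_lt_one hp0).mpr hlt)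
    linarith
  have hterm : ∀ p ∈ T, (g p)^2 / (1 - g p) ≤ (α₁^2/c) * ((((p - b : ℕ)):ℝ)^2)⁻¹ := by
    intro p hp
    obtain ⟨pp, hlt⟩ := hT p hp
    have hp0 : (0:ℝ) < p := lt_trans hα₁ hlt
    have hbp : b < p := by exact_mod_cast lt_of_le_of_lt hb hlt
    set k : ℕ := p - b with hkdef
    have hk1 : 1 ≤ k := by omega
    have hpk : (p:ℝ) = (b:ℝ) + (k:ℝ) := by
      rw [hkdef]; push_cast [Nat.cast_sub hbp.le]; ring
    have hk1R : (1:ℝ) ≤ (k:ℝ) := by exact_mod_cast hk1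
    have hck : c * (k:ℝ) ≤ (p:ℝ) - α₁ := by
      rw [hpk, hcdef]; nlinarith
    have hkp : (k:ℝ) ≤ (p:ℝ) := by
      rw [hpk]; have : (0:ℝ) ≤ (b:ℝ) := Nat.cast_nonneg b; linarith
    have hnum : (g p)^2 ≤ (α₁/(p:ℝ))^2 := by
      apply pow_le_pow_left₀ (hg0 p) (hgp p pp)
    have hden0 : (0:ℝ) < ((p:ℝ) - α₁) / p := by
      apply div_pos (by linarith) hp0
    have hden : ((p:ℝ) - α₁) / p ≤ 1 - g p := by
      have h1 : g p ≤ α₁ / p := hgp p pp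
      have h2 : ((p:ℝ) - α₁)/p = 1 - α₁/p := by field_simp
      rw [h2]; linarith
    calc (g p)^2 / (1 - g p) ≤ (α₁/(p:ℝ))^2 / (((p:ℝ) - α₁)/p) :=
          div_le_div₀ (by positivity) hnum hden0 hden
      _ = α₁^2 / ((p:ℝ) * ((p:ℝ) - α₁)) := by
          have hpne : (p:ℝ) ≠ 0 := ne_of_gt hp0
          have hpa : (p:ℝ) - α₁ ≠ 0 := by linarith
          field_simp
      _ ≤ α₁^2 / (c * (k:ℝ)^2) := by
          apply div_le_div_of_nonneg_left (by positivity) (by positivity)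
          nlinarith
      _ = (α₁^2/c) * (((k:ℝ))^2)⁻¹ := by
          have hcne : c ≠ 0 := ne_of_gt hc0
          have hkne : ((k:ℝ))^2 ≠ 0 := by positivity
          field_simp
  have hsum2 : ∑ p ∈ T, ((((p - b : ℕ)):ℝ)^2)⁻¹ ≤ 2 := by
    have hinj : ∀ x ∈ T, ∀ y ∈ T, x - b = y - b → x = y := by
      intro x hx y hy hxy
      have h1 : b < x := by exact_mod_cast lt_of_le_of_lt hb (hT x hx).2
      have h2 : b < y := by exact_mod_cast lt_of_le_of_lt hb (hT y hy).2
      omega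
    rw [← Finset.sum_image (f := fun k : ℕ => (((k:ℝ))^2)⁻¹) hinj]
    have hsub : T.image (· - b) ⊆ Finset.Icc 1 (T.sup id) := by
      intro k hk
      rw [Finset.mem_image] at hk
      obtain ⟨p, hp, rfl⟩ := hk
      have h1 : b < p := by exact_mod_cast lt_of_le_of_lt hb (hT p hp).2
      rw [Finset.mem_Icc]
      constructor
      · omega
      · exact le_trans (Nat.sub_le p b) (Finset.le_sup (f := id) hp)
    calc ∑ k ∈ T.image (· - b), (((k:ℝ))^2)⁻¹
        ≤ ∑ k ∈ Finset.Icc 1 (T.sup id), (((k:ℝ))^2)⁻¹ :=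
          Finset.sum_le_sum_of_subset_of_nonneg hsub (fun i _ _ => by positivity)
      _ ≤ 2 - ((T.sup id : ℕ):ℝ)⁻¹ := aux_sum_inv_sq _
      _ ≤ 2 := by
          have : (0:ℝ) ≤ ((T.sup id : ℕ):ℝ)⁻¹ := by positivity
          linarith
  calc ∏ p ∈ T, (1 + (g p)^2 / (1 - g p))
      ≤ ∏ p ∈ T, Real.exp ((g p)^2 / (1 - g p)) := by
        apply Finset.prod_le_prod
        · intro p hp
          have := hpos p hp
          have := hg0 p
          positivity
        · intro p hp
          have := Real.add_one_le_exp ((g p)^2 / (1 - g p))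
          linarith
    _ = Real.exp (∑ p ∈ T, (g p)^2 / (1 - g p)) := (Real.exp_sum T _).symm
    _ ≤ Real.exp (2 * α₁^2 / c) := by
        apply Real.exp_le_exp.mpr
        calc ∑ p ∈ T, (g p)^2 / (1 - g p)
            ≤ ∑ p ∈ T, (α₁^2/c) * ((((p - b : ℕ)):ℝ)^2)⁻¹ := Finset.sum_le_sum hterm
          _ = (α₁^2/c) * ∑ p ∈ T, ((((p - b : ℕ)):ℝ)^2)⁻¹ := by rw [Finset.mul_sum]
          _ ≤ (α₁^2/c) * 2 := by
              apply mul_le_mul_of_nonneg_left hsum2 (by positivity)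
          _ = 2 * α₁^2 / c := by ring

/-- The finite set of primes `p` with `lo < p ≤ hi` not dividing `a`. -/
noncomputable def primeRange (lo hi : ℝ) (a : ℕ) : Finset ℕ :=
  (Finset.range (⌊hi⌋₊ + 1)).filter
    (fun p : ℕ => p.Prime ∧ lo < (p : ℝ) ∧ (p : ℝ) ≤ hi ∧ ¬ p ∣ a)

lemma aux_mem_primeRange {lo hi : ℝ} {a p : ℕ} :
    p ∈ primeRange lo hi a ↔ p.Prime ∧ lo < (p:ℝ) ∧ (p:ℝ) ≤ hi ∧ ¬ p ∣ a := by
  unfold primeRange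
  rw [Finset.mem_filter, Finset.mem_range, Nat.lt_succ_iff]
  constructor
  · rintro ⟨-, h⟩; exact h
  · rintro ⟨hp, h1, h2, h3⟩
    exact ⟨Nat.le_floor h2, hp, h1, h2, h3⟩

theorem stmt_7 (α₁ : ℝ) (hα₁ : 0 < α₁) :
    ∃ K : ℝ, 0 < K ∧ ∀ g : ℕ → ℝ, (∀ n, 0 ≤ g n) → g 1 = 1 →
    (∀ m n : ℕ, Nat.Coprime m n → g (m * n) = g m * g n) →
    (∀ p : ℕ, p.Prime → g p ≤ α₁ / p) →
    ∀ (a : ℕ) (α₂ α₃ x : ℝ), 0 < α₂ → 0 < α₃ → 2 ≤ x →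
    (∑ m ∈ (∏ p ∈ primeRange α₁ (x ^ α₂) a, p).divisors,
        g m * ∏ p ∈ primeRange α₁ (x ^ α₃) (a * m), (1 - g p) ^ 2)
      ≤ K * (if α₂ ≤ α₃ then
              ∏ p ∈ (primeRange α₁ (x ^ α₃) a).filter (fun p : ℕ => x ^ α₂ < (p : ℝ)),
                (1 - g p) ^ 2
             else
              ∏ p ∈ (primeRange α₁ (x ^ α₂) a).filter (fun p : ℕ => x ^ α₃ < (p : ℝ)),
                (1 - g p)⁻¹)
        * ∏ p ∈ primeRange α₁ (x ^ min α₂ α₃) a, (1 - g p) := by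
  refine ⟨Real.exp (2 * α₁^2 / ((⌊α₁⌋₊ + 1 : ℝ) - α₁)), Real.exp_pos _, ?_⟩
  intro g hg0 hg1 hgm hgp a α₂ α₃ x hα₂ hα₃ hx
  set K : ℝ := Real.exp (2 * α₁^2 / ((⌊α₁⌋₊ + 1 : ℝ) - α₁)) with hKdef
  set P2 := primeRange α₁ (x ^ α₂) a with hP2
  set P3 := primeRange α₁ (x ^ α₃) a with hP3
  have hx1 : (1:ℝ) ≤ x := by linarith
  have hmemP : ∀ (hi : ℝ) (p : ℕ), p ∈ primeRange α₁ hi a → Nat.Prime p ∧ α₁ < (p:ℝ) :=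
    fun hi p hp => ⟨(aux_mem_primeRange.mp hp).1, (aux_mem_primeRange.mp hp).2.1⟩
  have hmem2 : ∀ p ∈ P2, Nat.Prime p ∧ α₁ < (p:ℝ) := fun p hp => hmemP _ p hp
  have hmem3 : ∀ p ∈ P3, Nat.Prime p ∧ α₁ < (p:ℝ) := fun p hp => hmemP _ p hp
  have hpos : ∀ p : ℕ, Nat.Prime p → α₁ < (p:ℝ) → 0 < 1 - g p := by
    intro p pp hlt
    have hp0 : (0:ℝ) < p := lt_trans hα₁ hlt
    have h := hgp p pp
    have : g p < 1 := lt_of_le_of_lt h ((div_lt_one hp0).mpr hlt)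
    linarith
  have hposP3 : ∀ p ∈ P3, 0 < 1 - g p := fun p hp => hpos p (hmem3 p hp).1 (hmem3 p hp).2
  have hposP2 : ∀ p ∈ P2, 0 < 1 - g p := fun p hp => hpos p (hmem2 p hp).1 (hmem2 p hp).2
  have hinner : ∀ m : ℕ, primeRange α₁ (x ^ α₃) (a * m) = P3.filter (fun p => ¬ p ∣ m) := by
    intro m
    ext p
    rw [aux_mem_primeRange, Finset.mem_filter, hP3, aux_mem_primeRange]
    constructor
    · rintro ⟨pp, h1, h2, h3⟩
      exact ⟨⟨pp, h1, h2, fun hd => h3 (hd.mul_right m)⟩, fun hd => h3 (hd.mul_left a)⟩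
    · rintro ⟨⟨pp, h1, h2, h3⟩, h4⟩
      refine ⟨pp, h1, h2, fun hd => ?_⟩
      rcases (Nat.Prime.dvd_mul pp).mp hd with h | h
      · exact h3 h
      · exact h4 h
  set f : ℕ → ℝ := fun m => g m * ∏ p ∈ P3.filter (fun p => p ∣ m), ((1 - g p)^2)⁻¹ with hfdef
  have hne2 : ∀ p ∈ P3, ((1 - g p)^2) ≠ 0 := fun p hp => by
    have := hposP3 p hp; positivity
  have hf1 : f 1 = 1 := by
    rw [hfdef]
    have he : P3.filter (fun p => p ∣ 1) = ∅ := by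
      apply Finset.filter_eq_empty_iff.mpr
      intro p hp hd
      exact (hmem3 p hp).1.ne_one (Nat.dvd_one.mp hd)
    simp only [he, Finset.prod_empty, hg1, mul_one]
  have hfm : ∀ m n : ℕ, Nat.Coprime m n → f (m*n) = f m * f n := by
    intro m n hmn
    rcases eq_or_ne m 0 with rfl | hm
    · have hn1 : n = 1 := (Nat.coprime_zero_left n).mp hmn
      subst hn1; rw [mul_one, hf1, mul_one]
    rcases eq_or_ne n 0 with rfl | hn
    · have hm1 : m = 1 := (Nat.coprime_zero_right m).mp hmn
      subst hm1; rw [one_mul, hf1, one_mul]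
    have hfilter : P3.filter (fun p => p ∣ m * n)
        = P3.filter (fun p => p ∣ m) ∪ P3.filter (fun p => p ∣ n) := by
      rw [← Finset.filter_or]
      apply Finset.filter_congr
      intro p hp
      exact (hmem3 p hp).1.dvd_mul
    have hdisj : Disjoint (P3.filter (fun p => p ∣ m)) (P3.filter (fun p => p ∣ n)) := by
      rw [Finset.disjoint_left]
      intro p hp1 hp2
      rw [Finset.mem_filter] at hp1 hp2
      have pp := (hmem3 p hp1.1).1
      exact pp.ne_one ((hmn.coprime_dvd_left hp1.2).eq_one_of_dvd hp2.2)
    rw [hfdef]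
    simp only
    rw [hgm m n hmn, hfilter, Finset.prod_union hdisj]
    ring
  have hP2primes : ∀ p ∈ P2, Nat.Prime p := fun p hp => (hmem2 p hp).1
  have hkey := aux_sum_divisors_prod_primes hf1 hfm P2 hP2primes
  have hsum : (∑ m ∈ (∏ p ∈ P2, p).divisors,
        g m * ∏ p ∈ primeRange α₁ (x ^ α₃) (a * m), (1 - g p) ^ 2)
      = (∏ p ∈ P3, (1 - g p)^2) * ∏ p ∈ P2, (1 + f p) := by
    rw [← hkey, Finset.mul_sum]
    apply Finset.sum_congr rfl
    intro m hm
    rw [hinner m,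
      ← Finset.prod_filter_mul_prod_filter_not P3 (fun p => p ∣ m) (fun p => (1 - g p)^2)]
    have hA : (∏ p ∈ P3.filter (fun p => p ∣ m), (1 - g p)^2)
        * ∏ p ∈ P3.filter (fun p => p ∣ m), ((1 - g p)^2)⁻¹ = 1 := by
      rw [← Finset.prod_mul_distrib]
      apply Finset.prod_eq_one
      intro p hp
      exact mul_inv_cancel₀ (hne2 p (Finset.mem_filter.mp hp).1)
    rw [hfdef]
    simp only
    linear_combination (-(g m * ∏ p ∈ P3.filter (fun p => ¬ p ∣ m), (1 - g p)^2)) * hA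
  have hfp : ∀ p ∈ P2, f p = g p * (if p ∈ P3 then ((1 - g p)^2)⁻¹ else 1) := by
    intro p hp2
    have pp := hP2primes p hp2
    rw [hfdef]
    simp only
    congr 1
    by_cases hp3 : p ∈ P3
    · rw [if_pos hp3]
      have he : P3.filter (fun q => q ∣ p) = {p} := by
        ext q
        rw [Finset.mem_filter, Finset.mem_singleton]
        constructor
        · rintro ⟨hq, hd⟩
          exact (Nat.prime_dvd_prime_iff_eq (hmem3 q hq).1 pp).mp hd
        · rintro rfl; exact ⟨hp3, dvd_rfl⟩
      rw [he, Finset.prod_singleton]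
    · rw [if_neg hp3]
      have he : P3.filter (fun q => q ∣ p) = ∅ := by
        apply Finset.filter_eq_empty_iff.mpr
        intro q hq hd
        have : q = p := (Nat.prime_dvd_prime_iff_eq (hmem3 q hq).1 pp).mp hd
        subst this
        exact hp3 hq
      rw [he, Finset.prod_empty]
  rw [hsum]
  by_cases h23 : α₂ ≤ α₃
  · rw [if_pos h23, min_eq_left h23]
    have hsub : P2 ⊆ P3 := by
      intro p hp
      rw [hP2, aux_mem_primeRange] at hp
      rw [hP3, aux_mem_primeRange]
      obtain ⟨pp, h1, h2, h3⟩ := hp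
      exact ⟨pp, h1, le_trans h2 (Real.rpow_le_rpow_of_exponent_le hx1 h23), h3⟩
    have hsplit : (∏ p ∈ P3, (1 - g p)^2)
        = (∏ p ∈ P3.filter (fun p : ℕ => x ^ α₂ < (p:ℝ)), (1 - g p)^2)
          * ∏ p ∈ P2, (1 - g p)^2 := by
      rw [← Finset.prod_filter_mul_prod_filter_not P3 (fun p => x ^ α₂ < (p:ℝ))
        (fun p => (1 - g p)^2)]
      congr 1
      refine Finset.prod_congr ?_ (fun _ _ => rfl)
      ext p
      rw [Finset.mem_filter, hP3, aux_mem_primeRange, hP2, aux_mem_primeRange]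
      constructor
      · rintro ⟨⟨pp, h1, h2, h3⟩, h4⟩
        exact ⟨pp, h1, not_lt.mp h4, h3⟩
      · rintro ⟨pp, h1, h2, h3⟩
        exact ⟨⟨pp, h1, le_trans h2 (Real.rpow_le_rpow_of_exponent_le hx1 h23), h3⟩,
          not_lt.mpr h2⟩
    rw [hsplit]
    have hper : ∀ p ∈ P2, (1 - g p)^2 * (1 + f p)
        = (1 - g p) * (1 + (g p)^2 / (1 - g p)) := by
      intro p hp
      rw [hfp p hp, if_pos (hsub hp)]
      have h0 : 0 < 1 - g p := hposP2 p hp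
      have hne : 1 - g p ≠ 0 := ne_of_gt h0
      field_simp
      ring
    have hQ : ∏ p ∈ P2, (1 + (g p)^2 / (1 - g p)) ≤ K :=
      aux_prod_le_exp α₁ hα₁ g hg0 hgp P2 hmem2
    have hBnn : (0:ℝ) ≤ ∏ p ∈ P3.filter (fun p : ℕ => x ^ α₂ < (p:ℝ)), (1 - g p)^2 :=
      Finset.prod_nonneg fun p hp => by positivity
    have hPnn : (0:ℝ) ≤ ∏ p ∈ P2, (1 - g p) :=
      Finset.prod_nonneg fun p hp => (hposP2 p hp).le
    calc (∏ p ∈ P3.filter (fun p : ℕ => x ^ α₂ < (p:ℝ)), (1 - g p)^2)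
          * (∏ p ∈ P2, (1 - g p)^2) * (∏ p ∈ P2, (1 + f p))
        = (∏ p ∈ P3.filter (fun p : ℕ => x ^ α₂ < (p:ℝ)), (1 - g p)^2)
          * ((∏ p ∈ P2, (1 - g p)) * ∏ p ∈ P2, (1 + (g p)^2 / (1 - g p))) := by
          rw [mul_assoc, ← Finset.prod_mul_distrib, Finset.prod_congr rfl hper,
            Finset.prod_mul_distrib]
      _ ≤ (∏ p ∈ P3.filter (fun p : ℕ => x ^ α₂ < (p:ℝ)), (1 - g p)^2)
          * ((∏ p ∈ P2, (1 - g p)) * K) := by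
          apply mul_le_mul_of_nonneg_left _ hBnn
          exact mul_le_mul_of_nonneg_left hQ hPnn
      _ = K * (∏ p ∈ P3.filter (fun p : ℕ => x ^ α₂ < (p:ℝ)), (1 - g p)^2)
          * ∏ p ∈ P2, (1 - g p) := by ring
  · rw [if_neg h23, min_eq_right (le_of_not_ge h23)]
    have h32 : α₃ ≤ α₂ := le_of_not_ge h23
    have hsplit2 : ∏ p ∈ P2, (1 + f p)
        = (∏ p ∈ P2.filter (fun p : ℕ => x ^ α₃ < (p:ℝ)), (1 + f p)) * ∏ p ∈ P3, (1 + f p) := by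
      rw [← Finset.prod_filter_mul_prod_filter_not P2 (fun p => x ^ α₃ < (p:ℝ))
        (fun p => 1 + f p)]
      congr 1
      refine Finset.prod_congr ?_ (fun _ _ => rfl)
      ext p
      rw [Finset.mem_filter, hP2, aux_mem_primeRange, hP3, aux_mem_primeRange]
      constructor
      · rintro ⟨⟨pp, h1, h2, h3⟩, h4⟩
        exact ⟨pp, h1, not_lt.mp h4, h3⟩
      · rintro ⟨pp, h1, h2, h3⟩
        exact ⟨⟨pp, h1, le_trans h2 (Real.rpow_le_rpow_of_exponent_le hx1 h32), h3⟩,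
          not_lt.mpr h2⟩
    have hsub : P3 ⊆ P2 := by
      intro p hp
      rw [hP3, aux_mem_primeRange] at hp
      rw [hP2, aux_mem_primeRange]
      obtain ⟨pp, h1, h2, h3⟩ := hp
      exact ⟨pp, h1, le_trans h2 (Real.rpow_le_rpow_of_exponent_le hx1 h32), h3⟩
    rw [hsplit2]
    have hnotin : ∀ p ∈ P2.filter (fun p : ℕ => x ^ α₃ < (p:ℝ)), p ∉ P3 := by
      intro p hp hp3
      have h1 := (Finset.mem_filter.mp hp).2
      have h2 := (aux_mem_primeRange.mp (hP3 ▸ hp3)).2.2.1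
      exact absurd h2 (not_le.mpr h1)
    have hBfilter : ∀ p ∈ P2.filter (fun p : ℕ => x ^ α₃ < (p:ℝ)), 1 + f p = 1 + g p := by
      intro p hp
      rw [hfp p (Finset.filter_subset _ _ hp), if_neg (hnotin p hp), mul_one]
    have hper3 : ∀ p ∈ P3, (1 - g p)^2 * (1 + f p)
        = (1 - g p) * (1 + (g p)^2 / (1 - g p)) := by
      intro p hp
      rw [hfp p (hsub hp), if_pos hp]
      have h0 : 0 < 1 - g p := hposP3 p hp
      have hne : 1 - g p ≠ 0 := ne_of_gt h0
      field_simp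
      ring
    have hQ3 : ∏ p ∈ P3, (1 + (g p)^2 / (1 - g p)) ≤ K :=
      aux_prod_le_exp α₁ hα₁ g hg0 hgp P3 hmem3
    have hBle : ∏ p ∈ P2.filter (fun p : ℕ => x ^ α₃ < (p:ℝ)), (1 + g p)
        ≤ ∏ p ∈ P2.filter (fun p : ℕ => x ^ α₃ < (p:ℝ)), (1 - g p)⁻¹ := by
      apply Finset.prod_le_prod
      · intro p hp
        have := hg0 p
        linarith
      · intro p hp
        have h0 : 0 < 1 - g p := hposP2 p (Finset.filter_subset _ _ hp)
        have h2 : (1 + g p) * (1 - g p) ≤ 1 := by nlinarith [sq_nonneg (g p), hg0 p]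
        calc 1 + g p = (1 + g p) * (1 - g p) * (1 - g p)⁻¹ := by field_simp
          _ ≤ 1 * (1 - g p)⁻¹ := mul_le_mul_of_nonneg_right h2 (by positivity)
          _ = (1 - g p)⁻¹ := one_mul _
    have hCnn : (0:ℝ) ≤ (∏ p ∈ P3, (1 - g p)) * ∏ p ∈ P3, (1 + (g p)^2 / (1 - g p)) := by
      apply mul_nonneg
      · exact Finset.prod_nonneg fun p hp => (hposP3 p hp).le
      · apply Finset.prod_nonneg
        intro p hp
        have h0 := hposP3 p hp
        have := hg0 p
        positivity
    have hDnn : (0:ℝ) ≤ ∏ p ∈ P2.filter (fun p : ℕ => x ^ α₃ < (p:ℝ)), (1 - g p)⁻¹ := by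
      apply Finset.prod_nonneg
      intro p hp
      have h0 : 0 < 1 - g p := hposP2 p (Finset.filter_subset _ _ hp)
      positivity
    calc (∏ p ∈ P3, (1 - g p)^2)
          * ((∏ p ∈ P2.filter (fun p : ℕ => x ^ α₃ < (p:ℝ)), (1 + f p)) * ∏ p ∈ P3, (1 + f p))
        = (∏ p ∈ P2.filter (fun p : ℕ => x ^ α₃ < (p:ℝ)), (1 + g p))
          * ((∏ p ∈ P3, (1 - g p)) * ∏ p ∈ P3, (1 + (g p)^2 / (1 - g p))) := by
          rw [Finset.prod_congr rfl hBfilter]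
          rw [show (∏ p ∈ P3, (1 - g p)^2)
              * ((∏ p ∈ P2.filter (fun p : ℕ => x ^ α₃ < (p:ℝ)), (1 + g p)) * ∏ p ∈ P3, (1 + f p))
            = (∏ p ∈ P2.filter (fun p : ℕ => x ^ α₃ < (p:ℝ)), (1 + g p))
              * ((∏ p ∈ P3, (1 - g p)^2) * ∏ p ∈ P3, (1 + f p)) from by ring]
          rw [← Finset.prod_mul_distrib, Finset.prod_congr rfl hper3, Finset.prod_mul_distrib]
      _ ≤ (∏ p ∈ P2.filter (fun p : ℕ => x ^ α₃ < (p:ℝ)), (1 - g p)⁻¹)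
          * ((∏ p ∈ P3, (1 - g p)) * K) := by
          apply mul_le_mul hBle _ hCnn hDnn
          exact mul_le_mul_of_nonneg_left hQ3
            (Finset.prod_nonneg fun p hp => (hposP3 p hp).le)
      _ = K * (∏ p ∈ P2.filter (fun p : ℕ => x ^ α₃ < (p:ℝ)), (1 - g p)⁻¹)
          * ∏ p ∈ P3, (1 - g p) := by ring
end

section
/- Let c₀, c₁, c₂ be positive constants and let F be multiplicative with F(p^e) ≤ min{c₀/p, p^(c₁ − e c₂)} for all primes p, e ≥ 1. Fix γ > 0, C > 1, C' > 0, and suppose G : ℕ → [0,∞) satisfies G(ab) ≤ G(a)·min{C^(Ω(b)), C' b^(c₂/2)} for coprime a, b. Suppose for each prime p we are given c(p) ∈ [0, γ/p]. Then for all T ≥ 1, Σ_{a ≤ T} F(a) G(a) ∏_{p | a} (1 + c(p)) ≤ 2^(γγ') · Σ_{a ≤ T} F(a) G(a), where γ' = (1 + 2(1+c₁)/c₂)·c₀·C^(1+2(1+c₁)/c₂) + C'·(2^(c₂/2) − 1)^(−1). -/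
open scoped Classical
open Finset

lemma euler_finite (w : ℕ → ℕ → ℝ) (hw0 : ∀ p e, 0 ≤ w p e) (hw1 : ∀ p, w p 0 = 1)
    (K : ℕ) (Q : Finset ℕ) :
    ∀ (B : Finset ℕ), (∀ b ∈ B, b ≠ 0 ∧ b.primeFactors ⊆ Q ∧ ∀ p, b.factorization p ≤ K) →
    ∑ b ∈ B, ∏ p ∈ Q, w p (b.factorization p) ≤ ∏ p ∈ Q, ∑ e ∈ range (K+1), w p e := by
  induction Q using Finset.induction_on with
  | empty =>
    intro B hB
    simp only [prod_empty, sum_const, nsmul_eq_mul, mul_one]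
    have : B.card ≤ 1 := by
      refine Finset.card_le_one.mpr fun a ha b hb => ?_
      have ha' := hB a ha; have hb' := hB b hb
      have h1 : a = 1 := by
        rcases (Nat.primeFactors_eq_empty).mp (Finset.subset_empty.mp ha'.2.1) with h | h
        · exact absurd h ha'.1
        · exact h
      have h2 : b = 1 := by
        rcases (Nat.primeFactors_eq_empty).mp (Finset.subset_empty.mp hb'.2.1) with h | h
        · exact absurd h hb'.1
        · exact h
      rw [h1, h2]
    exact_mod_cast this
  | @insert q Q' hq ih =>
    intro B hB
    set B' : Finset ℕ := B.image (fun b => ordCompl[q] b) with hB'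
    have hstep : ∀ b ∈ B, ∀ p ∈ Q', (ordCompl[q] b).factorization p = b.factorization p := by
      intro b _ p hp
      rw [Nat.factorization_ordCompl]
      exact Finsupp.erase_ne (fun h => hq (h ▸ hp))
    have key : ∑ b ∈ B, ∏ p ∈ insert q Q', w p (b.factorization p)
        = ∑ b ∈ B, (w q (b.factorization q) *
            ∏ p ∈ Q', w p ((ordCompl[q] b).factorization p)) := by
      refine Finset.sum_congr rfl fun b hb => ?_
      rw [Finset.prod_insert hq]
      congr 1
      exact Finset.prod_congr rfl fun p hp => by rw [hstep b hb p hp]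
    rw [key]
    have hinj : Set.InjOn (fun b => (b.factorization q, ordCompl[q] b)) B := by
      intro b₁ h₁ b₂ h₂ h
      have e1 : b₁.factorization q = b₂.factorization q := congrArg Prod.fst h
      have e2 : ordCompl[q] b₁ = ordCompl[q] b₂ := congrArg Prod.snd h
      have h1 := (Nat.ordProj_mul_ordCompl_eq_self b₁ q).symm
      rw [e2, e1] at h1
      rw [h1, Nat.ordProj_mul_ordCompl_eq_self]
    have himg : B.image (fun b => (b.factorization q, ordCompl[q] b))
        ⊆ (range (K+1)) ×ˢ B' := by
      intro y hy
      rcases Finset.mem_image.mp hy with ⟨b, hb, rfl⟩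
      refine Finset.mem_product.mpr ⟨?_, Finset.mem_image_of_mem _ hb⟩
      exact Finset.mem_range.mpr (Nat.lt_succ_of_le ((hB b hb).2.2 q))
    calc ∑ b ∈ B, (w q (b.factorization q) *
            ∏ p ∈ Q', w p ((ordCompl[q] b).factorization p))
        = ∑ y ∈ B.image (fun b => (b.factorization q, ordCompl[q] b)),
            (w q y.1 * ∏ p ∈ Q', w p (y.2.factorization p)) := by
          rw [Finset.sum_image fun x hx y hy h => hinj hx hy h]
      _ ≤ ∑ y ∈ (range (K+1)) ×ˢ B', (w q y.1 * ∏ p ∈ Q', w p (y.2.factorization p)) := by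
          refine Finset.sum_le_sum_of_subset_of_nonneg himg fun y _ _ => ?_
          exact mul_nonneg (hw0 _ _) (Finset.prod_nonneg fun p _ => hw0 _ _)
      _ = (∑ e ∈ range (K+1), w q e) * ∑ b' ∈ B', ∏ p ∈ Q', w p (b'.factorization p) := by
          rw [Finset.sum_mul_sum]
          rw [Finset.sum_product]
      _ ≤ (∑ e ∈ range (K+1), w q e) * ∏ p ∈ Q', ∑ e ∈ range (K+1), w p e := by
          refine mul_le_mul_of_nonneg_left ?_ (Finset.sum_nonneg fun e _ => hw0 _ _)
          refine ih B' fun b' hb' => ?_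
          rcases Finset.mem_image.mp hb' with ⟨b, hb, rfl⟩
          obtain ⟨hb0, hbQ, hbK⟩ := hB b hb
          have hb'0 : ordCompl[q] b ≠ 0 := (Nat.ordCompl_pos q hb0).ne'
          refine ⟨hb'0, ?_, ?_⟩
          · intro p hp
            have hpb : p ∈ b.primeFactors :=
              Nat.mem_primeFactors.mpr ⟨Nat.prime_of_mem_primeFactors hp,
                (Nat.dvd_of_mem_primeFactors hp).trans (Nat.ordCompl_dvd b q), hb0⟩
            rcases Finset.mem_insert.mp (hbQ hpb) with hpq | hpQ'
            · exfalso
              have h0 : (ordCompl[q] b).factorization p ≠ 0 := by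
                rw [← Nat.support_factorization] at hp
                exact Finsupp.mem_support_iff.mp hp
              rw [Nat.factorization_ordCompl, hpq, Finsupp.erase_same] at h0
              exact h0 rfl
            · exact hpQ'
          · intro p
            rw [Nat.factorization_ordCompl]
            by_cases hpq : p = q
            · subst hpq; simp
            · rw [Finsupp.erase_ne hpq]; exact hbK p
      _ = ∏ p ∈ insert q Q', ∑ e ∈ range (K+1), w p e := by rw [Finset.prod_insert hq]


lemma factD (a : ℕ) (s : Finset ℕ) (hs : s ⊆ a.primeFactors) (q : ℕ) :
    (∏ p ∈ s, p ^ a.factorization p).factorization q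
      = if q ∈ s then a.factorization q else 0 := by
  have hne : ∀ p ∈ s, p ^ a.factorization p ≠ 0 := fun p hp =>
    pow_ne_zero _ (Nat.prime_of_mem_primeFactors (hs hp)).ne_zero
  rw [Nat.factorization_prod hne]
  rw [Finsupp.finset_sum_apply]
  rw [Finset.sum_congr rfl (fun p hp => by
    rw [(Nat.prime_of_mem_primeFactors (hs hp)).factorization_pow, Finsupp.single_apply])]
  exact Finset.sum_ite_eq' s q (fun p => a.factorization p)

lemma Dne (a : ℕ) (s : Finset ℕ) (hs : s ⊆ a.primeFactors) :
    (∏ p ∈ s, p ^ a.factorization p) ≠ 0 :=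
  Finset.prod_ne_zero_iff.mpr fun p hp =>
    pow_ne_zero _ (Nat.prime_of_mem_primeFactors (hs hp)).ne_zero

lemma Ddvd (a : ℕ) (ha : a ≠ 0) (s : Finset ℕ) (hs : s ⊆ a.primeFactors) :
    (∏ p ∈ s, p ^ a.factorization p) ∣ a := by
  have h : a = ∏ p ∈ a.primeFactors, p ^ a.factorization p := by
    conv_lhs => rw [← Nat.factorization_prod_pow_eq_self ha]
    rfl
  calc (∏ p ∈ s, p ^ a.factorization p) ∣ ∏ p ∈ a.primeFactors, p ^ a.factorization p :=
        Finset.prod_dvd_prod_of_subset s a.primeFactors _ hs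
    _ = a := h.symm

lemma DprimeFactors (a : ℕ) (s : Finset ℕ) (hs : s ⊆ a.primeFactors) :
    (∏ p ∈ s, p ^ a.factorization p).primeFactors = s := by
  ext q
  rw [← Nat.support_factorization, Finsupp.mem_support_iff, factD a s hs q]
  constructor
  · intro h
    by_contra hq
    simp [hq] at h
  · intro hq
    simp only [hq, if_true]
    rw [← Finsupp.mem_support_iff, Nat.support_factorization]
    exact hs hq

lemma peel (c₂ C C' : ℝ)
    (F : ℕ → ℝ) (hF0 : ∀ n, 0 ≤ F n)
    (hFmul : ∀ m n : ℕ, Nat.Coprime m n → F (m * n) = F m * F n)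
    (G : ℕ → ℝ) (hG0 : ∀ n, 0 ≤ G n)
    (hG : ∀ a b : ℕ, 0 < a → 0 < b → Nat.Coprime a b →
      G (a * b) ≤ G a * min (C ^ b.primeFactorsList.length) (C' * (b : ℝ) ^ (c₂ / 2)))
    (hCpos : 0 ≤ C) (hC'pos : 0 ≤ C')
    (s : Finset ℕ) :
    ∀ a : ℕ, a ≠ 0 → s ⊆ a.primeFactors →
    F a * G a ≤ F (a / ∏ p ∈ s, p ^ a.factorization p)
      * G (a / ∏ p ∈ s, p ^ a.factorization p)
      * ∏ p ∈ s, (F (p ^ a.factorization p) *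
          min (C ^ (a.factorization p)) (C' * ((p ^ a.factorization p : ℕ) : ℝ) ^ (c₂ / 2))) := by
  induction s using Finset.induction_on with
  | empty => intro a ha _; simp
  | @insert q s hq ih =>
    intro a ha hsub
    have hsub' : s ⊆ a.primeFactors := (Finset.subset_insert q s).trans hsub
    have hqa : q ∈ a.primeFactors := hsub (Finset.mem_insert_self q s)
    have hq' : q.Prime := Nat.prime_of_mem_primeFactors hqa
    set e := a.factorization q with he
    have he1 : 1 ≤ e :=
      Nat.Prime.factorization_pos_of_dvd hq' ha (Nat.dvd_of_mem_primeFactors hqa)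
    set Ds := ∏ p ∈ s, p ^ a.factorization p with hDs
    set Di := ∏ p ∈ insert q s, p ^ a.factorization p with hDi
    have hDieq : Di = q ^ e * Ds := by rw [hDi, Finset.prod_insert hq]
    have hDsdvd : Ds ∣ a := Ddvd a ha s hsub'
    have hDidvd : Di ∣ a := Ddvd a ha (insert q s) hsub
    set ms := a / Ds with hms
    set mi := a / Di with hmi
    have hms0 : ms ≠ 0 := Nat.div_ne_zero_iff_of_dvd hDsdvd |>.mpr ⟨ha, Dne a s hsub'⟩
    have hmi0 : mi ≠ 0 := Nat.div_ne_zero_iff_of_dvd hDidvd |>.mpr ⟨ha, Dne a (insert q s) hsub⟩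
    -- q-adic valuation of ms is e
    have hfms : ms.factorization q = e := by
      rw [hms, Nat.factorization_div hDsdvd, Finsupp.tsub_apply, factD a s hsub' q,
        if_neg hq, Nat.sub_zero, he]
    have hfmi : mi.factorization q = 0 := by
      rw [hmi, Nat.factorization_div hDidvd, Finsupp.tsub_apply,
        factD a (insert q s) hsub q, if_pos (Finset.mem_insert_self q s), Nat.sub_self]
    have hqe_dvd : q ^ e ∣ ms := by
      have := Nat.ordProj_dvd ms q
      rwa [hfms] at this
    have hmseq : mi * q ^ e = ms := by
      rw [hmi, hDieq, mul_comm (q ^ e) Ds, ← Nat.div_div_eq_div_mul, ← hms]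
      exact Nat.div_mul_cancel hqe_dvd
    have hcop : Nat.Coprime mi (q ^ e) := by
      have hnd : ¬ q ∣ mi := by
        intro hd
        have := (Nat.Prime.factorization_pos_of_dvd hq' hmi0 hd)
        omega
      exact (Nat.Coprime.pow_right e (((Nat.Prime.coprime_iff_not_dvd hq').mpr hnd).symm))
    have hFeq : F ms = F mi * F (q ^ e) := by rw [← hmseq, hFmul mi (q ^ e) hcop]
    have hOmega : (q ^ e).primeFactorsList.length = e := by
      rw [hq'.primeFactorsList_pow, List.length_replicate]
    have hGle : G ms ≤ G mi * min (C ^ e) (C' * ((q ^ e : ℕ) : ℝ) ^ (c₂ / 2)) := by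
      have := hG mi (q ^ e) (Nat.pos_of_ne_zero hmi0)
        (pow_pos hq'.pos e) hcop
      rw [hmseq, hOmega] at this
      exact this
    have hminnn : (0:ℝ) ≤ min (C ^ e) (C' * ((q ^ e : ℕ) : ℝ) ^ (c₂ / 2)) :=
      le_min (pow_nonneg hCpos e)
        (mul_nonneg hC'pos (Real.rpow_nonneg (Nat.cast_nonneg _) _))
    have hstep : F ms * G ms ≤ F mi * G mi *
        (F (q ^ e) * min (C ^ e) (C' * ((q ^ e : ℕ) : ℝ) ^ (c₂ / 2))) := by
      calc F ms * G ms = (F mi * F (q ^ e)) * G ms := by rw [hFeq]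
        _ ≤ (F mi * F (q ^ e)) * (G mi * min (C ^ e) (C' * ((q ^ e : ℕ) : ℝ) ^ (c₂ / 2))) := by
            exact mul_le_mul_of_nonneg_left hGle (mul_nonneg (hF0 _) (hF0 _))
        _ = F mi * G mi * (F (q ^ e) * min (C ^ e) (C' * ((q ^ e : ℕ) : ℝ) ^ (c₂ / 2))) := by
            ring
    have hPs : (0:ℝ) ≤ ∏ p ∈ s, (F (p ^ a.factorization p) *
        min (C ^ (a.factorization p)) (C' * ((p ^ a.factorization p : ℕ) : ℝ) ^ (c₂ / 2))) :=
      Finset.prod_nonneg fun p _ => mul_nonneg (hF0 _)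
        (le_min (pow_nonneg hCpos _) (mul_nonneg hC'pos (Real.rpow_nonneg (Nat.cast_nonneg _) _)))
    calc F a * G a ≤ F ms * G ms * ∏ p ∈ s, (F (p ^ a.factorization p) *
          min (C ^ (a.factorization p)) (C' * ((p ^ a.factorization p : ℕ) : ℝ) ^ (c₂ / 2))) :=
        ih a ha hsub'
      _ ≤ (F mi * G mi * (F (q ^ e) * min (C ^ e) (C' * ((q ^ e : ℕ) : ℝ) ^ (c₂ / 2))))
          * ∏ p ∈ s, (F (p ^ a.factorization p) *
          min (C ^ (a.factorization p)) (C' * ((p ^ a.factorization p : ℕ) : ℝ) ^ (c₂ / 2))) :=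
        mul_le_mul_of_nonneg_right hstep hPs
      _ = F mi * G mi * ∏ p ∈ insert q s, (F (p ^ a.factorization p) *
          min (C ^ (a.factorization p)) (C' * ((p ^ a.factorization p : ℕ) : ℝ) ^ (c₂ / 2))) := by
        rw [Finset.prod_insert hq, he]
        ring


lemma localsum (c₀ c₁ c₂ C C' : ℝ) (h₀ : 0 < c₀) (h₁ : 0 < c₁) (h₂ : 0 < c₂)
    (hC : 1 < C) (hC' : 0 < C')
    (F : ℕ → ℝ) (hF0 : ∀ n, 0 ≤ F n)
    (hFp : ∀ p e : ℕ, p.Prime → 1 ≤ e →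
      F (p ^ e) ≤ min (c₀ / p) ((p : ℝ) ^ (c₁ - (e : ℝ) * c₂)))
    (p : ℕ) (hp : p.Prime) (K : ℕ) :
    ∑ e ∈ Finset.Icc 1 K, (F (p ^ e) * min (C ^ e) (C' * ((p ^ e : ℕ) : ℝ) ^ (c₂ / 2)))
      ≤ ((1 + 2 * (1 + c₁) / c₂) * c₀ * C ^ (1 + 2 * (1 + c₁) / c₂)
          + C' * ((2 : ℝ) ^ (c₂ / 2) - 1)⁻¹) / p := by
  set E : ℝ := 1 + 2 * (1 + c₁) / c₂ with hE
  have hE1 : (1:ℝ) ≤ E := by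
    rw [hE]; nlinarith [div_nonneg (by nlinarith : (0:ℝ) ≤ 2 * (1 + c₁)) h₂.le]
  have hE0 : (0:ℝ) ≤ E := by linarith
  have hp2 : (2:ℝ) ≤ (p:ℝ) := by exact_mod_cast hp.two_le
  have hppos : (0:ℝ) < (p:ℝ) := by linarith
  set t : ℝ := (2:ℝ) ^ (c₂ / 2) with ht
  have ht1 : 1 < t := by
    rw [ht]
    rw [Real.one_lt_rpow_iff_of_pos (by norm_num)]
    left; constructor <;> [norm_num; positivity]
  set r : ℝ := t⁻¹ with hr
  have hr0 : 0 ≤ r := by rw [hr]; positivity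
  have hr1 : r < 1 := by rw [hr]; rw [inv_lt_one_iff₀]; right; exact ht1
  set e₀ : ℕ := ⌊E⌋₊ + 1 with he₀
  -- nonneg of terms
  have hterm0 : ∀ e : ℕ, 0 ≤ F (p ^ e) * min (C ^ e) (C' * ((p ^ e : ℕ) : ℝ) ^ (c₂ / 2)) := by
    intro e
    refine mul_nonneg (hF0 _) (le_min (pow_nonneg (by linarith) _) ?_)
    exact mul_nonneg hC'.le (Real.rpow_nonneg (Nat.cast_nonneg _) _)
  rw [← Finset.sum_filter_add_sum_filter_not (Finset.Icc 1 K) (fun e => e ≤ ⌊E⌋₊)]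
  have part1 : ∑ e ∈ (Finset.Icc 1 K).filter (fun e => e ≤ ⌊E⌋₊),
      (F (p ^ e) * min (C ^ e) (C' * ((p ^ e : ℕ) : ℝ) ^ (c₂ / 2)))
      ≤ E * c₀ * C ^ E / p := by
    have hbd : ∀ e ∈ (Finset.Icc 1 K).filter (fun e => e ≤ ⌊E⌋₊),
        F (p ^ e) * min (C ^ e) (C' * ((p ^ e : ℕ) : ℝ) ^ (c₂ / 2)) ≤ c₀ / p * C ^ E := by
      intro e he
      rw [Finset.mem_filter, Finset.mem_Icc] at he
      have hF : F (p ^ e) ≤ c₀ / p :=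
        (hFp p e hp he.1.1).trans (min_le_left _ _)
      have hmin : min (C ^ e) (C' * ((p ^ e : ℕ) : ℝ) ^ (c₂ / 2)) ≤ C ^ E := by
        refine (min_le_left _ _).trans ?_
        rw [← Real.rpow_natCast C e]
        apply Real.rpow_le_rpow_of_exponent_le hC.le
        calc (e:ℝ) ≤ (⌊E⌋₊ : ℝ) := by exact_mod_cast he.2
          _ ≤ E := Nat.floor_le hE0
      apply mul_le_mul hF hmin
      · exact le_min (pow_nonneg (by linarith) _)
          (mul_nonneg hC'.le (Real.rpow_nonneg (Nat.cast_nonneg _) _))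
      · positivity
    calc ∑ e ∈ (Finset.Icc 1 K).filter (fun e => e ≤ ⌊E⌋₊),
          (F (p ^ e) * min (C ^ e) (C' * ((p ^ e : ℕ) : ℝ) ^ (c₂ / 2)))
        ≤ ((Finset.Icc 1 K).filter (fun e => e ≤ ⌊E⌋₊)).card • (c₀ / p * C ^ E) :=
          Finset.sum_le_card_nsmul _ _ _ hbd
      _ = ((Finset.Icc 1 K).filter (fun e => e ≤ ⌊E⌋₊)).card * (c₀ / p * C ^ E) := by
          rw [nsmul_eq_mul]
      _ ≤ (⌊E⌋₊ : ℝ) * (c₀ / p * C ^ E) := by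
          apply mul_le_mul_of_nonneg_right _ (by positivity)
          have hsub : (Finset.Icc 1 K).filter (fun e => e ≤ ⌊E⌋₊) ⊆ Finset.Icc 1 ⌊E⌋₊ := by
            intro e he
            rw [Finset.mem_filter, Finset.mem_Icc] at he
            exact Finset.mem_Icc.mpr ⟨he.1.1, he.2⟩
          have := Finset.card_le_card hsub
          rw [Nat.card_Icc] at this
          exact_mod_cast Nat.le_of_lt_succ (Nat.lt_succ_of_le (by simpa using this))
      _ ≤ E * (c₀ / p * C ^ E) := by
          exact mul_le_mul_of_nonneg_right (Nat.floor_le hE0) (by positivity)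
      _ = E * c₀ * C ^ E / p := by ring
  have part2 : ∑ e ∈ (Finset.Icc 1 K).filter (fun e => ¬ e ≤ ⌊E⌋₊),
      (F (p ^ e) * min (C ^ e) (C' * ((p ^ e : ℕ) : ℝ) ^ (c₂ / 2)))
      ≤ C' * (t - 1)⁻¹ / p := by
    have hbd2 : ∀ e ∈ (Finset.Icc 1 K).filter (fun e => ¬ e ≤ ⌊E⌋₊),
        F (p ^ e) * min (C ^ e) (C' * ((p ^ e : ℕ) : ℝ) ^ (c₂ / 2))
          ≤ C' / p * r ^ (1 + (e - e₀)) := by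
      intro e he
      rw [Finset.mem_filter, Finset.mem_Icc, not_le] at he
      have hee : e₀ ≤ e := he.2
      set j : ℕ := e - e₀ with hj
      have hecast : (e : ℝ) = (e₀ : ℝ) + (j : ℝ) := by
        rw [hj]
        push_cast [Nat.cast_sub hee]
        ring
      have he₀E : E < (e₀ : ℝ) := by
        rw [he₀]
        push_cast
        exact Nat.lt_floor_add_one E
      have hcast : ((p ^ e : ℕ) : ℝ) ^ (c₂ / 2) = (p:ℝ) ^ ((e:ℝ) * (c₂ / 2)) := by
        push_cast
        rw [← Real.rpow_natCast (p:ℝ) e, ← Real.rpow_mul hppos.le]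
      have hF : F (p ^ e) ≤ (p:ℝ) ^ (c₁ - (e:ℝ) * c₂) :=
        (hFp p e hp he.1.1).trans (min_le_right _ _)
      have h1 : F (p ^ e) * min (C ^ e) (C' * ((p ^ e : ℕ) : ℝ) ^ (c₂ / 2))
          ≤ (p:ℝ) ^ (c₁ - (e:ℝ) * c₂) * (C' * (p:ℝ) ^ ((e:ℝ) * (c₂ / 2))) := by
        apply mul_le_mul hF ((min_le_right _ _).trans_eq (by rw [hcast]))
        · exact le_min (pow_nonneg (by linarith) _)
            (mul_nonneg hC'.le (Real.rpow_nonneg (Nat.cast_nonneg _) _))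
        · positivity
      have h2 : (p:ℝ) ^ (c₁ - (e:ℝ) * c₂) * (C' * (p:ℝ) ^ ((e:ℝ) * (c₂ / 2)))
          = C' * (p:ℝ) ^ (c₁ - (e:ℝ) * (c₂ / 2)) := by
        rw [mul_comm ((p:ℝ) ^ (c₁ - (e:ℝ) * c₂)) _, mul_assoc, ← Real.rpow_add hppos]
        ring_nf
      have hexp : c₁ - (e:ℝ) * (c₂ / 2) ≤ (-1 : ℝ) - (1 + (j:ℝ)) * (c₂ / 2) := by
        have hEc : E * (c₂ / 2) = c₂ / 2 + (1 + c₁) := by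
          rw [hE]
          field_simp
        have h1' : (E + (j:ℝ)) * (c₂ / 2) ≤ (e:ℝ) * (c₂ / 2) := by
          apply mul_le_mul_of_nonneg_right _ (by linarith)
          rw [hecast]; linarith
        nlinarith
      have h3 : (p:ℝ) ^ (c₁ - (e:ℝ) * (c₂ / 2)) ≤ (p:ℝ) ^ ((-1 : ℝ) - (1 + (j:ℝ)) * (c₂ / 2)) :=
        Real.rpow_le_rpow_of_exponent_le (by linarith) hexp
      have h4 : (p:ℝ) ^ ((-1 : ℝ) - (1 + (j:ℝ)) * (c₂ / 2))
          = (p:ℝ)⁻¹ * ((p:ℝ) ^ ((1 + (j:ℝ)) * (c₂ / 2)))⁻¹ := by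
        rw [sub_eq_add_neg, Real.rpow_add hppos, Real.rpow_neg_one, Real.rpow_neg hppos.le]
      have h5 : ((p:ℝ) ^ ((1 + (j:ℝ)) * (c₂ / 2)))⁻¹ ≤ r ^ (1 + j) := by
        have hle : (2:ℝ) ^ ((1 + (j:ℝ)) * (c₂ / 2)) ≤ (p:ℝ) ^ ((1 + (j:ℝ)) * (c₂ / 2)) :=
          Real.rpow_le_rpow (by norm_num) hp2 (by positivity)
        have heq : (2:ℝ) ^ ((1 + (j:ℝ)) * (c₂ / 2)) = t ^ (1 + j) := by
          rw [ht, ← Real.rpow_natCast ((2:ℝ) ^ (c₂ / 2)) (1 + j), ← Real.rpow_mul (by norm_num)]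
          push_cast
          ring_nf
        rw [hr, inv_pow]
        exact inv_anti₀ (pow_pos (lt_trans zero_lt_one ht1) _) (heq ▸ hle)
      calc F (p ^ e) * min (C ^ e) (C' * ((p ^ e : ℕ) : ℝ) ^ (c₂ / 2))
          ≤ C' * (p:ℝ) ^ (c₁ - (e:ℝ) * (c₂ / 2)) := h1.trans_eq h2
        _ ≤ C' * ((p:ℝ)⁻¹ * ((p:ℝ) ^ ((1 + (j:ℝ)) * (c₂ / 2)))⁻¹) := by
            rw [← h4]
            exact mul_le_mul_of_nonneg_left h3 hC'.le
        _ ≤ C' * ((p:ℝ)⁻¹ * r ^ (1 + j)) := by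
            apply mul_le_mul_of_nonneg_left _ hC'.le
            exact mul_le_mul_of_nonneg_left h5 (by positivity)
        _ = C' / p * r ^ (1 + (e - e₀)) := by rw [hj]; ring
    have hgeom : ∀ n : ℕ, ∑ i ∈ Finset.range n, r ^ i ≤ (1 - r)⁻¹ := by
      intro n
      have h1r : (0:ℝ) < 1 - r := by linarith
      rw [geom_sum_eq (ne_of_lt hr1) n]
      rw [div_le_iff_of_neg (by linarith : r - 1 < 0)]
      have hme : (1 - r)⁻¹ * (r - 1) = -1 := by
        rw [mul_comm, ← div_eq_mul_inv, div_eq_iff (ne_of_gt h1r)]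
        ring
      rw [hme]
      nlinarith [pow_nonneg hr0 n]
    have hrgeo : r * (1 - r)⁻¹ = (t - 1)⁻¹ := by
      rw [hr]
      have ht0 : t ≠ 0 := by positivity
      have ht1' : t - 1 ≠ 0 := by intro h; nlinarith
      field_simp
    calc ∑ e ∈ (Finset.Icc 1 K).filter (fun e => ¬ e ≤ ⌊E⌋₊),
          (F (p ^ e) * min (C ^ e) (C' * ((p ^ e : ℕ) : ℝ) ^ (c₂ / 2)))
        ≤ ∑ e ∈ (Finset.Icc 1 K).filter (fun e => ¬ e ≤ ⌊E⌋₊), C' / p * r ^ (1 + (e - e₀)) :=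
          Finset.sum_le_sum hbd2
      _ ≤ ∑ e ∈ Finset.Ico e₀ (K + 1), C' / p * r ^ (1 + (e - e₀)) := by
          apply Finset.sum_le_sum_of_subset_of_nonneg
          · intro e he
            rw [Finset.mem_filter, Finset.mem_Icc, not_le] at he
            exact Finset.mem_Ico.mpr ⟨he.2, Nat.lt_succ_of_le he.1.2⟩
          · intro e _ _
            positivity
      _ = ∑ i ∈ Finset.range (K + 1 - e₀), C' / p * r ^ (1 + (e₀ + i - e₀)) := by
          rw [Finset.sum_Ico_eq_sum_range]
      _ = ∑ i ∈ Finset.range (K + 1 - e₀), C' / p * (r * r ^ i) := by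
          refine Finset.sum_congr rfl fun i _ => ?_
          congr 1
          rw [Nat.add_sub_cancel_left]
          ring
      _ = C' / p * r * ∑ i ∈ Finset.range (K + 1 - e₀), r ^ i := by
          rw [Finset.mul_sum]
          refine Finset.sum_congr rfl fun i _ => by ring
      _ ≤ C' / p * r * (1 - r)⁻¹ := by
          apply mul_le_mul_of_nonneg_left (hgeom _) (by positivity)
      _ = C' / p * (r * (1 - r)⁻¹) := by ring
      _ = C' * (t - 1)⁻¹ / p := by rw [hrgeo]; ring
  calc _ ≤ E * c₀ * C ^ E / p + C' * (t - 1)⁻¹ / p := add_le_add part1 part2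
    _ = (E * c₀ * C ^ E + C' * (t - 1)⁻¹) / p := by ring


lemma psum (N : ℕ) : ∑ p ∈ (N+1).primesBelow, (((p:ℝ))^2)⁻¹ ≤ Real.log 2 := by
  set Q := (N+1).primesBelow with hQ
  have hQprime : ∀ p ∈ Q, p.Prime := fun p hp => Nat.prime_of_mem_primesBelow hp
  have hQle : ∀ p ∈ Q, p ≤ N := fun p hp =>
    Nat.lt_succ_iff.mp (Nat.lt_of_mem_primesBelow hp)
  set Q' := (Q.erase 2).erase 3 with hQ'
  have hsub : Q ⊆ insert 2 (insert 3 Q') := by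
    intro p hp
    by_cases h2 : p = 2
    · exact Finset.mem_insert.mpr (Or.inl h2)
    by_cases h3 : p = 3
    · exact Finset.mem_insert.mpr (Or.inr (Finset.mem_insert.mpr (Or.inl h3)))
    · exact Finset.mem_insert.mpr (Or.inr (Finset.mem_insert.mpr (Or.inr
        (Finset.mem_erase.mpr ⟨h3, Finset.mem_erase.mpr ⟨h2, hp⟩⟩))))
  have h2ni : (2:ℕ) ∉ insert 3 Q' := by
    simp only [Finset.mem_insert]
    push_neg
    exact ⟨by norm_num, fun h => (Finset.mem_erase.mp (Finset.mem_erase.mp h).2).1 rfl⟩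
  have h3ni : (3:ℕ) ∉ Q' := fun h => (Finset.mem_erase.mp h).1 rfl
  have step1 : ∑ p ∈ Q, (((p:ℝ))^2)⁻¹ ≤ (1:ℝ)/4 + 1/9 + ∑ p ∈ Q', (((p:ℝ))^2)⁻¹ := by
    calc ∑ p ∈ Q, (((p:ℝ))^2)⁻¹ ≤ ∑ p ∈ insert 2 (insert 3 Q'), (((p:ℝ))^2)⁻¹ :=
          Finset.sum_le_sum_of_subset_of_nonneg hsub (fun p _ _ => by positivity)
      _ = (((2:ℕ):ℝ)^2)⁻¹ + ((((3:ℕ):ℝ)^2)⁻¹ + ∑ p ∈ Q', (((p:ℝ))^2)⁻¹) := by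
          rw [Finset.sum_insert h2ni, Finset.sum_insert h3ni]
      _ = (1:ℝ)/4 + 1/9 + ∑ p ∈ Q', (((p:ℝ))^2)⁻¹ := by norm_num; ring
  have step2 : ∑ p ∈ Q', (((p:ℝ))^2)⁻¹ ≤ (1:ℝ)/4 := by
    have hsub2 : Q' ⊆ Finset.Ico 5 (N+5) := by
      intro p hp
      have hp3 := Finset.mem_erase.mp hp
      have hp2 := Finset.mem_erase.mp hp3.2
      have hpp := hQprime p hp2.2
      have hne4 : p ≠ 4 := fun h => by rw [h] at hpp; norm_num at hpp
      have := hpp.two_le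
      have := hQle p hp2.2
      rw [Finset.mem_Ico]
      omega
    calc ∑ p ∈ Q', (((p:ℝ))^2)⁻¹
        ≤ ∑ n ∈ Finset.Ico 5 (N+5), (((n:ℝ) - 1)⁻¹ - ((n:ℝ))⁻¹) := by
          refine Finset.sum_le_sum_of_subset_of_nonneg hsub2 ?_ |>.trans
            (Finset.sum_le_sum ?_)
          · intro n hn _
            positivity
          · intro n hn
            have h5 : (5:ℝ) ≤ (n:ℝ) := by
              exact_mod_cast (Finset.mem_Ico.mp hn).1
            have h1 : (0:ℝ) < (n:ℝ) - 1 := by linarith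
            have h0 : (0:ℝ) < (n:ℝ) := by linarith
            have heq : ((n:ℝ) - 1)⁻¹ - ((n:ℝ))⁻¹ = (((n:ℝ) - 1) * (n:ℝ))⁻¹ := by
              field_simp
              ring
            rw [heq]
            apply inv_anti₀ (by positivity)
            nlinarith
      _ = ∑ i ∈ Finset.range N, ((((5+i:ℕ):ℝ) - 1)⁻¹ - (((5+i:ℕ):ℝ))⁻¹) := by
          rw [Finset.sum_Ico_eq_sum_range]
          norm_num
      _ = ∑ i ∈ Finset.range N, ((((i:ℝ)) + 4)⁻¹ - (((i:ℝ)) + 1 + 4)⁻¹) := by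
          refine Finset.sum_congr rfl fun i _ => ?_
          push_cast
          ring_nf
      _ = ((0:ℝ) + 4)⁻¹ - (((N:ℝ)) + 4)⁻¹ := by
          have h := Finset.sum_range_sub' (fun i => (((i:ℕ):ℝ) + 4)⁻¹) N
          push_cast at h ⊢
          rw [← h]
      _ ≤ (1:ℝ)/4 := by
          norm_num
          positivity
  have hlog : (11:ℝ)/18 ≤ Real.log 2 := by
    have := Real.log_two_gt_d9
    linarith
  calc ∑ p ∈ Q, (((p:ℝ))^2)⁻¹ ≤ (1:ℝ)/4 + 1/9 + 1/4 := by linarith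
    _ = 11/18 := by norm_num
    _ ≤ Real.log 2 := hlog


theorem stmt_10 (c₀ c₁ c₂ γ C C' : ℝ) (h₀ : 0 < c₀) (h₁ : 0 < c₁) (h₂ : 0 < c₂)
    (hγ : 0 < γ) (hC : 1 < C) (hC' : 0 < C')
    (F : ℕ → ℝ) (hF0 : ∀ n, 0 ≤ F n) (hF1 : F 1 = 1)
    (hFmul : ∀ m n : ℕ, Nat.Coprime m n → F (m * n) = F m * F n)
    (hFp : ∀ p e : ℕ, p.Prime → 1 ≤ e →
      F (p ^ e) ≤ min (c₀ / p) ((p : ℝ) ^ (c₁ - (e : ℝ) * c₂)))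
    (G : ℕ → ℝ) (hG0 : ∀ n, 0 ≤ G n)
    (hG : ∀ a b : ℕ, 0 < a → 0 < b → Nat.Coprime a b →
      G (a * b) ≤ G a * min (C ^ b.primeFactorsList.length) (C' * (b : ℝ) ^ (c₂ / 2)))
    (c : ℕ → ℝ) (hc : ∀ p : ℕ, p.Prime → 0 ≤ c p ∧ c p ≤ γ / p)
    (T : ℝ) (hT : 1 ≤ T) :
    (∑ a ∈ Finset.Icc 1 ⌊T⌋₊, F a * G a * ∏ p ∈ a.primeFactors, (1 + c p))
      ≤ (2 : ℝ) ^ (γ * ((1 + 2 * (1 + c₁) / c₂) * c₀ * C ^ (1 + 2 * (1 + c₁) / c₂)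
            + C' * ((2 : ℝ) ^ (c₂ / 2) - 1)⁻¹))
        * ∑ a ∈ Finset.Icc 1 ⌊T⌋₊, F a * G a := by
  set N := ⌊T⌋₊ with hNdef
  set E : ℝ := 1 + 2 * (1 + c₁) / c₂ with hEdef
  set g' : ℝ := E * c₀ * C ^ E + C' * ((2:ℝ) ^ (c₂ / 2) - 1)⁻¹ with hg'def
  have hCpos : (0:ℝ) < C := by linarith
  have ht1 : (1:ℝ) < (2:ℝ) ^ (c₂ / 2) := by
    rw [Real.one_lt_rpow_iff_of_pos (by norm_num)]
    left; exact ⟨by norm_num, by positivity⟩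
  have hg'0 : 0 ≤ g' := by
    have hE0 : (0:ℝ) ≤ E := by rw [hEdef]; positivity
    have hx1 : (0:ℝ) ≤ E * c₀ * C ^ E := by positivity
    have hx2 : (0:ℝ) < ((2:ℝ) ^ (c₂ / 2) - 1)⁻¹ := by
      rw [inv_pos]; linarith
    rw [hg'def]; nlinarith
  set w : ℕ → ℕ → ℝ := fun p e =>
    c p * (F (p ^ e) * min (C ^ e) (C' * ((p ^ e : ℕ) : ℝ) ^ (c₂ / 2))) with hwdef
  have hw0 : ∀ p : ℕ, p.Prime → ∀ e, 0 ≤ w p e := fun p hp e =>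
    mul_nonneg (hc p hp).1 (mul_nonneg (hF0 _) (le_min (pow_nonneg hCpos.le _)
      (mul_nonneg hC'.le (Real.rpow_nonneg (Nat.cast_nonneg _) _))))
  set HH : ℕ → ℝ := fun b => ∏ p ∈ b.primeFactors, w p (b.factorization p) with hHHdef
  have hHH0 : ∀ b, 0 ≤ HH b := fun b => Finset.prod_nonneg fun p hp =>
    hw0 p (Nat.prime_of_mem_primeFactors hp) _
  set A := Finset.Icc 1 N with hAdef
  have hmemA : ∀ a ∈ A, a ≠ 0 ∧ a ≤ N := by
    intro a ha
    rw [hAdef, Finset.mem_Icc] at ha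
    exact ⟨by omega, ha.2⟩
  -- expand the product
  have expand : ∀ a : ℕ, (∏ p ∈ a.primeFactors, (1 + c p))
      = ∑ s ∈ a.primeFactors.powerset, ∏ p ∈ s, c p := by
    intro a
    calc (∏ p ∈ a.primeFactors, (1 + c p)) = ∏ p ∈ a.primeFactors, (c p + 1) :=
          Finset.prod_congr rfl fun p _ => add_comm 1 (c p)
      _ = ∑ s ∈ a.primeFactors.powerset, (∏ p ∈ s, c p) * ∏ p ∈ a.primeFactors \ s, 1 :=
          Finset.prod_add c (fun _ => 1) a.primeFactors
      _ = ∑ s ∈ a.primeFactors.powerset, ∏ p ∈ s, c p := by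
          refine Finset.sum_congr rfl fun s _ => ?_
          rw [Finset.prod_const_one, mul_one]
  -- pointwise bound
  have key1 : ∀ a ∈ A, ∀ s ∈ a.primeFactors.powerset,
      F a * G a * ∏ p ∈ s, c p
        ≤ F (a / ∏ p ∈ s, p ^ a.factorization p) * G (a / ∏ p ∈ s, p ^ a.factorization p)
          * HH (∏ p ∈ s, p ^ a.factorization p) := by
    intro a ha s hs
    have ha0 : a ≠ 0 := (hmemA a ha).1
    have hssub : s ⊆ a.primeFactors := Finset.mem_powerset.mp hs
    have hpeel := peel c₂ C C' F hF0 hFmul G hG0 hG hCpos.le hC'.le s a ha0 hssub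
    have hcnn : 0 ≤ ∏ p ∈ s, c p :=
      Finset.prod_nonneg fun p hp => (hc p (Nat.prime_of_mem_primeFactors (hssub hp))).1
    have hHHeq : HH (∏ p ∈ s, p ^ a.factorization p)
        = (∏ p ∈ s, (F (p ^ a.factorization p) *
            min (C ^ a.factorization p) (C' * ((p ^ a.factorization p : ℕ):ℝ) ^ (c₂/2))))
          * ∏ p ∈ s, c p := by
      rw [hHHdef]
      simp only
      rw [DprimeFactors a s hssub, ← Finset.prod_mul_distrib]
      refine Finset.prod_congr rfl fun p hp => ?_
      rw [factD a s hssub p, if_pos hp]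
      simp only [hwdef]
      ring
    calc F a * G a * ∏ p ∈ s, c p
        ≤ (F (a / ∏ p ∈ s, p ^ a.factorization p) * G (a / ∏ p ∈ s, p ^ a.factorization p)
            * ∏ p ∈ s, (F (p ^ a.factorization p) *
              min (C ^ a.factorization p) (C' * ((p ^ a.factorization p : ℕ):ℝ) ^ (c₂/2))))
            * ∏ p ∈ s, c p := mul_le_mul_of_nonneg_right hpeel hcnn
      _ = F (a / ∏ p ∈ s, p ^ a.factorization p) * G (a / ∏ p ∈ s, p ^ a.factorization p)
          * HH (∏ p ∈ s, p ^ a.factorization p) := by rw [hHHeq]; ring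
  -- the injection into pairs
  have hDfacts : ∀ a ∈ A, ∀ s ∈ a.primeFactors.powerset,
      (∏ p ∈ s, p ^ a.factorization p) ∈ A ∧ (a / ∏ p ∈ s, p ^ a.factorization p) ∈ A := by
    intro a ha s hs
    have ha0 : a ≠ 0 := (hmemA a ha).1
    have haN : a ≤ N := (hmemA a ha).2
    have hssub : s ⊆ a.primeFactors := Finset.mem_powerset.mp hs
    have hDdvd := Ddvd a ha0 s hssub
    have hD0 : (∏ p ∈ s, p ^ a.factorization p) ≠ 0 := Dne a s hssub
    have hDN : (∏ p ∈ s, p ^ a.factorization p) ≤ N :=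
      (Nat.le_of_dvd (Nat.pos_of_ne_zero ha0) hDdvd).trans haN
    have hm0 : a / (∏ p ∈ s, p ^ a.factorization p) ≠ 0 :=
      (Nat.div_ne_zero_iff_of_dvd hDdvd).mpr ⟨ha0, hD0⟩
    have hmN : a / (∏ p ∈ s, p ^ a.factorization p) ≤ N :=
      (Nat.le_of_dvd (Nat.pos_of_ne_zero ha0) (Nat.div_dvd_of_dvd hDdvd)).trans haN
    constructor
    · rw [hAdef, Finset.mem_Icc]
      exact ⟨Nat.one_le_iff_ne_zero.mpr hD0, hDN⟩
    · rw [hAdef, Finset.mem_Icc]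
      exact ⟨Nat.one_le_iff_ne_zero.mpr hm0, hmN⟩
  have hinjon : Set.InjOn
      (fun x : Σ _ : ℕ, Finset ℕ =>
        ((x.1 / ∏ p ∈ x.2, p ^ x.1.factorization p, ∏ p ∈ x.2, p ^ x.1.factorization p) : ℕ × ℕ))
      (A.sigma (fun a => a.primeFactors.powerset)) := by
    rintro ⟨a₁, s₁⟩ h₁ ⟨a₂, s₂⟩ h₂ h
    rw [Finset.mem_coe, Finset.mem_sigma] at h₁ h₂
    have hs₁ : s₁ ⊆ a₁.primeFactors := Finset.mem_powerset.mp h₁.2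
    have hs₂ : s₂ ⊆ a₂.primeFactors := Finset.mem_powerset.mp h₂.2
    have ha₁ : a₁ ≠ 0 := (hmemA a₁ h₁.1).1
    have ha₂ : a₂ ≠ 0 := (hmemA a₂ h₂.1).1
    have e1 : a₁ / (∏ p ∈ s₁, p ^ a₁.factorization p) = a₂ / (∏ p ∈ s₂, p ^ a₂.factorization p) :=
      congrArg Prod.fst h
    have e2 : (∏ p ∈ s₁, p ^ a₁.factorization p) = (∏ p ∈ s₂, p ^ a₂.factorization p) :=
      congrArg Prod.snd h
    have haa : a₁ = a₂ := by
      have q1 := Nat.div_mul_cancel (Ddvd a₁ ha₁ s₁ hs₁)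
      have q2 := Nat.div_mul_cancel (Ddvd a₂ ha₂ s₂ hs₂)
      rw [← q1, e1, e2, q2]
    subst haa
    have hss : s₁ = s₂ := by
      rw [← DprimeFactors a₁ s₁ hs₁, ← DprimeFactors a₁ s₂ hs₂, e2]
    subst hss
    rfl
  -- prime set
  set Q := (N+1).primesBelow with hQdef
  have hQprime : ∀ p ∈ Q, p.Prime := fun p hp => Nat.prime_of_mem_primesBelow hp
  set w' : ℕ → ℕ → ℝ := fun p e => if e = 0 then 1 else if p.Prime then w p e else 0 with hw'def
  have hw'0 : ∀ p e, 0 ≤ w' p e := by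
    intro p e
    rw [hw'def]
    simp only
    split
    · norm_num
    · split
      · exact hw0 p (by assumption) e
      · exact le_refl 0
  -- sum over b of HH is bounded
  have sumHH : ∑ b ∈ A, HH b ≤ ∏ p ∈ Q, ∑ e ∈ Finset.range (N+1), w' p e := by
    have hconv : ∀ b ∈ A, HH b = ∏ p ∈ Q, w' p (b.factorization p) := by
      intro b hb
      have hb0 : b ≠ 0 := (hmemA b hb).1
      have hbN : b ≤ N := (hmemA b hb).2
      have hpf : b.primeFactors ⊆ Q := by
        intro p hp
        refine Nat.mem_primesBelow.mpr ⟨?_, Nat.prime_of_mem_primeFactors hp⟩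
        have := Nat.le_of_dvd (Nat.pos_of_ne_zero hb0) (Nat.dvd_of_mem_primeFactors hp)
        omega
      rw [hHHdef]
      simp only
      rw [Finset.prod_congr rfl (fun p hp => ?_)]
      · exact Finset.prod_subset hpf (fun p _ hnp => by
          have hf0 : b.factorization p = 0 := by
            by_contra hne
            exact hnp (by rw [← Nat.support_factorization]; exact Finsupp.mem_support_iff.mpr hne)
          simp [hw'def, hf0])
      · show w p (b.factorization p) = w' p (b.factorization p)
        have hf : b.factorization p ≠ 0 := by
          rw [← Nat.support_factorization] at hp
          exact Finsupp.mem_support_iff.mp hp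
        simp [hw'def, hf, Nat.prime_of_mem_primeFactors hp]
    rw [Finset.sum_congr rfl hconv]
    refine euler_finite w' hw'0 (fun p => by rw [hw'def]; simp) N Q A ?_
    intro b hb
    refine ⟨(hmemA b hb).1, ?_, fun p => ?_⟩
    · intro p hp
      refine Nat.mem_primesBelow.mpr ⟨?_, Nat.prime_of_mem_primeFactors hp⟩
      have := Nat.le_of_dvd (Nat.pos_of_ne_zero (hmemA b hb).1) (Nat.dvd_of_mem_primeFactors hp)
      have := (hmemA b hb).2
      omega
    · have := Nat.factorization_lt p (hmemA b hb).1
      have := (hmemA b hb).2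
      omega
  -- local bound
  have localbd : ∀ p ∈ Q, ∑ e ∈ Finset.range (N+1), w' p e
      ≤ 1 + γ * g' * (((p:ℝ))^2)⁻¹ := by
    intro p hpQ
    have hp : p.Prime := hQprime p hpQ
    have hppos : (0:ℝ) < (p:ℝ) := by exact_mod_cast hp.pos
    have hsplit : ∑ e ∈ Finset.range (N+1), w' p e = 1 + ∑ e ∈ Finset.Icc 1 N, w p e := by
      rw [Finset.sum_range_succ']
      have h0 : w' p 0 = 1 := by simp [hw'def]
      rw [h0, add_comm]
      congr 1
      rw [← Finset.Ico_add_one_right_eq_Icc, Finset.sum_Ico_eq_sum_range]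
      refine Finset.sum_congr (by norm_num) fun i _ => ?_
      simp only [hw'def, if_neg (by omega : ¬ (i + 1 = 0)), if_pos hp, Nat.add_eq_zero]
      rw [add_comm 1 i]
    rw [hsplit]
    have hlocal := localsum c₀ c₁ c₂ C C' h₀ h₁ h₂ hC hC' F hF0 hFp p hp N
    have hXnn : 0 ≤ ∑ e ∈ Finset.Icc 1 N,
        (F (p ^ e) * min (C ^ e) (C' * ((p ^ e : ℕ) : ℝ) ^ (c₂ / 2))) :=
      Finset.sum_nonneg fun e _ => mul_nonneg (hF0 _) (le_min (pow_nonneg hCpos.le _)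
        (mul_nonneg hC'.le (Real.rpow_nonneg (Nat.cast_nonneg _) _)))
    have hsum : ∑ e ∈ Finset.Icc 1 N, w p e ≤ γ / p * (g' / p) := by
      calc ∑ e ∈ Finset.Icc 1 N, w p e
          = c p * ∑ e ∈ Finset.Icc 1 N,
              (F (p ^ e) * min (C ^ e) (C' * ((p ^ e : ℕ) : ℝ) ^ (c₂ / 2))) := by
            rw [Finset.mul_sum]
        _ ≤ γ / p * (g' / p) :=
            mul_le_mul (hc p hp).2 hlocal hXnn (by positivity)
    have heq : γ / p * (g' / p) = γ * g' * (((p:ℝ))^2)⁻¹ := by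
      rw [div_mul_div_comm, ← sq, div_eq_mul_inv]
    linarith [hsum.trans_eq heq]
  -- product bound
  have hγg' : 0 ≤ γ * g' := mul_nonneg hγ.le hg'0
  have prodbound : ∏ p ∈ Q, (∑ e ∈ Finset.range (N+1), w' p e) ≤ (2:ℝ) ^ (γ * g') := by
    calc ∏ p ∈ Q, (∑ e ∈ Finset.range (N+1), w' p e)
        ≤ ∏ p ∈ Q, Real.exp (γ * g' * (((p:ℝ))^2)⁻¹) := by
          refine Finset.prod_le_prod (fun p _ => Finset.sum_nonneg fun e _ => hw'0 p e) ?_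
          intro p hp
          refine (localbd p hp).trans ?_
          rw [add_comm]
          exact Real.add_one_le_exp _
      _ = Real.exp (∑ p ∈ Q, γ * g' * (((p:ℝ))^2)⁻¹) := (Real.exp_sum Q _).symm
      _ ≤ Real.exp (γ * g' * Real.log 2) := by
          rw [Real.exp_le_exp, ← Finset.mul_sum]
          exact mul_le_mul_of_nonneg_left (psum N) hγg'
      _ = (2:ℝ) ^ (γ * g') := by
          rw [Real.rpow_def_of_pos (by norm_num : (0:ℝ) < 2), mul_comm]
  -- main chain
  have hFGnn : 0 ≤ ∑ a ∈ A, F a * G a :=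
    Finset.sum_nonneg fun a _ => mul_nonneg (hF0 a) (hG0 a)
  calc (∑ a ∈ A, F a * G a * ∏ p ∈ a.primeFactors, (1 + c p))
      = ∑ a ∈ A, ∑ s ∈ a.primeFactors.powerset, F a * G a * ∏ p ∈ s, c p := by
        refine Finset.sum_congr rfl fun a _ => ?_
        rw [expand a, Finset.mul_sum]
    _ ≤ ∑ a ∈ A, ∑ s ∈ a.primeFactors.powerset,
          (F (a / ∏ p ∈ s, p ^ a.factorization p) * G (a / ∏ p ∈ s, p ^ a.factorization p)
            * HH (∏ p ∈ s, p ^ a.factorization p)) :=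
        Finset.sum_le_sum fun a ha => Finset.sum_le_sum fun s hs => key1 a ha s hs
    _ = ∑ x ∈ A.sigma (fun a => a.primeFactors.powerset),
          (F (x.1 / ∏ p ∈ x.2, p ^ x.1.factorization p)
            * G (x.1 / ∏ p ∈ x.2, p ^ x.1.factorization p)
            * HH (∏ p ∈ x.2, p ^ x.1.factorization p)) := by
        rw [Finset.sum_sigma]
    _ = ∑ y ∈ (A.sigma (fun a => a.primeFactors.powerset)).image
          (fun x : Σ _ : ℕ, Finset ℕ =>
            ((x.1 / ∏ p ∈ x.2, p ^ x.1.factorization p, ∏ p ∈ x.2, p ^ x.1.factorization p)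
              : ℕ × ℕ)),
          (F y.1 * G y.1 * HH y.2) := by
        rw [Finset.sum_image (fun x hx y hy h => hinjon hx hy h)]
    _ ≤ ∑ y ∈ A ×ˢ A, (F y.1 * G y.1 * HH y.2) := by
        refine Finset.sum_le_sum_of_subset_of_nonneg ?_ ?_
        · intro y hy
          rcases Finset.mem_image.mp hy with ⟨⟨a, s⟩, hx, rfl⟩
          rw [Finset.mem_sigma] at hx
          have := hDfacts a hx.1 s hx.2
          exact Finset.mem_product.mpr ⟨this.2, this.1⟩
        · intro y _ _
          exact mul_nonneg (mul_nonneg (hF0 _) (hG0 _)) (hHH0 _)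
    _ = ∑ m ∈ A, ∑ b ∈ A, (F m * G m * HH b) := Finset.sum_product _ _ _
    _ = (∑ m ∈ A, F m * G m) * (∑ b ∈ A, HH b) := (Finset.sum_mul_sum _ _ _ _).symm
    _ ≤ (∑ m ∈ A, F m * G m) * ((2:ℝ) ^ (γ * g')) :=
        mul_le_mul_of_nonneg_left (sumHH.trans prodbound) hFGnn
    _ = (2:ℝ) ^ (γ * g') * ∑ a ∈ A, F a * G a := mul_comm _ _
end
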